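/- Let α ∈ ℝ and suppose (x,p,u) : (−∞, s] → ℝⁿ × ℝⁿ × ℝ is C¹ and satisfies, for all t ≤ s, x'(t) = ∂_p H(x(t),p(t),t), p'(t) = −∂_x H(x(t),p(t),t) − f(t) p(t), and u'(t) = ⟨∂_p H(x(t),p(t),t), p(t)⟩ − H(x(t),p(t),t) + α − f(t) u(t). If u(s) ≤ u_α⁻(x(s), s) and liminf_{t→−∞} e^{F(t)} |u(t)| = 0, then u(s) = u_α⁻(x(s), s) and the curve x(·) is a backward calibrated curve of u_α⁻ ending at (x(s), s). -/

import Mathlib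

open MeasureTheory Real Filter
open scoped RealInnerProductSpace

noncomputable section

/-- `ℝⁿ` with the Euclidean norm. -/
abbrev Evec (n : ℕ) : Type := EuclideanSpace ℝ (Fin n)

/-- The vector of `Evec n` with integer coordinates `k`. -/
def intVec {n : ℕ} (k : Fin n → ℤ) : Evec n := WithLp.toLp 2 (fun i => (k i : ℝ))

/-- `γ` is absolutely continuous on the interval `S` with derivative `γ'`:
on any subinterval of `S` it is the indefinite integral of the locally
integrable function `γ'`. -/
def ACOn {n : ℕ} (γ γ' : ℝ → Evec n) (S : Set ℝ) : Prop :=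
  ∀ a ∈ S, ∀ b ∈ S,
    IntervalIntegrable γ' MeasureTheory.volume a b ∧ γ b = γ a + ∫ τ in a..b, γ' τ

/-- The set of (finite) actions `∫_{-∞}^t e^{F(s)-F(t)} (L + α)` of admissible
absolutely continuous curves `γ : (-∞, t] → ℝⁿ` with `γ t = x`. -/
def wkSet {n : ℕ} (F : ℝ → ℝ) (L : Evec n → Evec n → ℝ → ℝ) (α : ℝ)
    (x : Evec n) (t : ℝ) : Set ℝ :=
  { r | ∃ γ γ' : ℝ → Evec n, ACOn γ γ' (Set.Iic t) ∧ γ t = x ∧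
      MeasureTheory.IntegrableOn
        (fun s => Real.exp (F s - F t) * (L (γ s) (γ' s) s + α)) (Set.Iic t) ∧
      r = ∫ s in Set.Iic t, Real.exp (F s - F t) * (L (γ s) (γ' s) s + α) }

/-- The weak KAM solution `u_α⁻(x,t)`. -/
def uWK {n : ℕ} (F : ℝ → ℝ) (L : Evec n → Evec n → ℝ → ℝ) (α : ℝ)
    (x : Evec n) (t : ℝ) : ℝ :=
  sInf (wkSet F L α x t)

/-- The conjugate Tonelli Hamiltonian `H(x,p,t) = sup_v (⟨p,v⟩ - L(x,v,t))`. -/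
def Ham {n : ℕ} (L : Evec n → Evec n → ℝ → ℝ) (x p : Evec n) (t : ℝ) : ℝ :=
  ⨆ v : Evec n, (⟪p, v⟫ - L x v t)


open Topology

section AuxiliaryLemmas

variable {n : ℕ}

/-- The maximizer in the definition of `Ham`, if it exists; `0` otherwise. -/
def Mleg (L : Evec n → Evec n → ℝ → ℝ) (x p : Evec n) (t : ℝ) : Evec n :=
  Classical.epsilon fun v : Evec n => ∀ w, (⟪p, w⟫ - L x w t) ≤ (⟪p, v⟫ - L x v t)

theorem exists_max (L : Evec n → Evec n → ℝ → ℝ)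
    (hLc : Continuous fun q : Evec n × Evec n × ℝ => L q.1 q.2.1 q.2.2)
    (hLsuper : ∀ k : ℝ, 0 ≤ k → ∃ C : ℝ, ∀ x v t, k * ‖v‖ - C ≤ L x v t)
    (x p : Evec n) (t : ℝ) :
    ∃ v : Evec n, ∀ w, (⟪p, w⟫ - L x w t) ≤ (⟪p, v⟫ - L x v t) := by
  obtain ⟨C, hC⟩ := hLsuper (‖p‖ + 1) (by positivity)
  set φ : Evec n → ℝ := fun w => ⟪p, w⟫ - L x w t with hφ
  have hφc : Continuous φ := by
    apply Continuous.sub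
    · exact continuous_const.inner continuous_id
    · exact hLc.comp (continuous_const.prodMk (continuous_id.prodMk continuous_const))
  have key : ∀ w : Evec n, φ w ≤ C - ‖w‖ := by
    intro w
    have h1 : ⟪p, w⟫ ≤ ‖p‖ * ‖w‖ := real_inner_le_norm p w
    have h2 := hC x w t
    simp only [hφ]
    nlinarith [norm_nonneg w]
  set R : ℝ := C + |φ 0| + 1 with hR
  have hR0 : 0 ≤ R := by
    have := key 0
    simp only [norm_zero] at this
    have h0 : -|φ 0| ≤ φ 0 := neg_abs_le _
    simp only [hR]; linarith
  obtain ⟨v, hv, hvmax⟩ := (isCompact_closedBall (0 : Evec n) R).exists_isMaxOn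
    ⟨0, by simpa using hR0⟩ hφc.continuousOn
  refine ⟨v, fun w => ?_⟩
  rcases le_or_gt ‖w‖ R with hw | hw
  · exact hvmax (by simpa [Metric.mem_closedBall, dist_zero_right] using hw)
  · have h1 : φ w ≤ C - ‖w‖ := key w
    have h2 : φ 0 ≤ φ v := hvmax (by simpa using hR0)
    have h3 : -|φ 0| ≤ φ 0 := neg_abs_le _
    have h4 : C - ‖w‖ < φ 0 := by simp only [hR] at hw; linarith
    exact le_trans (h1.trans h4.le) h2

theorem Mleg_spec (L : Evec n → Evec n → ℝ → ℝ)
    (hLc : Continuous fun q : Evec n × Evec n × ℝ => L q.1 q.2.1 q.2.2)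
    (hLsuper : ∀ k : ℝ, 0 ≤ k → ∃ C : ℝ, ∀ x v t, k * ‖v‖ - C ≤ L x v t)
    (x p : Evec n) (t : ℝ) :
    ∀ w, (⟪p, w⟫ - L x w t) ≤ (⟪p, Mleg L x p t⟫ - L x (Mleg L x p t) t) := by
  exact Classical.epsilon_spec (exists_max L hLc hLsuper x p t)

theorem Ham_eq (L : Evec n → Evec n → ℝ → ℝ)
    (hLc : Continuous fun q : Evec n × Evec n × ℝ => L q.1 q.2.1 q.2.2)
    (hLsuper : ∀ k : ℝ, 0 ≤ k → ∃ C : ℝ, ∀ x v t, k * ‖v‖ - C ≤ L x v t)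
    (x p : Evec n) (t : ℝ) :
    Ham L x p t = ⟪p, Mleg L x p t⟫ - L x (Mleg L x p t) t := by
  have hspec := Mleg_spec L hLc hLsuper x p t
  refine le_antisymm (ciSup_le hspec) ?_
  exact le_ciSup ⟨_, by rintro r ⟨w, rfl⟩; exact hspec w⟩ (Mleg L x p t)
theorem contDiff_L_v (L : Evec n → Evec n → ℝ → ℝ)
    (hLsm : ContDiff ℝ 2 (fun q : Evec n × Evec n × ℝ => L q.1 q.2.1 q.2.2))
    (x : Evec n) (t : ℝ) : ContDiff ℝ 2 (fun v : Evec n => L x v t) :=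
  hLsm.comp (contDiff_const.prodMk (contDiff_id.prodMk contDiff_const))

theorem L_strict_mid (L : Evec n → Evec n → ℝ → ℝ)
    (hLsm : ContDiff ℝ 2 (fun q : Evec n × Evec n × ℝ => L q.1 q.2.1 q.2.2))
    (hLconv : ∀ (x : Evec n) (t : ℝ) (v w : Evec n), w ≠ 0 →
      0 < iteratedFDeriv ℝ 2 (fun v' => L x v' t) v ![w, w])
    (x : Evec n) (t : ℝ) (v₁ v₂ : Evec n) (hne : v₁ ≠ v₂) :
    L x ((1/2 : ℝ) • v₁ + (1/2 : ℝ) • v₂) t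
      < (1/2 : ℝ) * L x v₁ t + (1/2 : ℝ) * L x v₂ t := by
  set g : Evec n → ℝ := fun v => L x v t with hg
  have hgsm : ContDiff ℝ 2 g := contDiff_L_v L hLsm x t
  set w : Evec n := v₂ - v₁ with hw
  have hwne : w ≠ 0 := sub_ne_zero.2 (Ne.symm hne)
  set A : ℝ → Evec n := fun r => v₁ + r • w with hA
  have hAder : ∀ r : ℝ, HasDerivAt A w r := by
    intro r
    have := ((hasDerivAt_id r).smul_const w).const_add v₁
    rw [one_smul] at this
    exact this
  have hAc : Continuous A := by
    apply Continuous.add continuous_const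
    exact continuous_id.smul continuous_const
  set ψ : ℝ → ℝ := g ∘ A with hψ
  have hψder : ∀ r : ℝ, HasDerivAt ψ ((fderiv ℝ g (A r)) w) r := fun r =>
    ((hgsm.differentiable (by norm_num)).differentiableAt.hasFDerivAt).comp_hasDerivAt r (hAder r)
  have hDg : ContDiff ℝ 1 (fderiv ℝ g) := hgsm.fderiv_right (by norm_num)
  have hψ2 : ∀ r : ℝ, HasDerivAt (deriv ψ) ((fderiv ℝ (fderiv ℝ g) (A r)) w w) r := by
    intro r
    have hder : deriv ψ = (fun y => (fderiv ℝ g y) w) ∘ A := by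
      funext r'; exact (hψder r').deriv
    rw [hder]
    have h1 : HasFDerivAt (fun y => (fderiv ℝ g y) w)
        ((ContinuousLinearMap.apply ℝ ℝ w).comp (fderiv ℝ (fderiv ℝ g) (A r))) (A r) := by
      exact (ContinuousLinearMap.apply ℝ ℝ w).hasFDerivAt.comp (A r)
        ((hDg.differentiable (by norm_num)).differentiableAt.hasFDerivAt)
    simpa using h1.comp_hasDerivAt r (hAder r)
  have hconv : StrictConvexOn ℝ Set.univ ψ := by
    apply strictConvexOn_of_deriv2_pos convex_univ
    · exact (hgsm.continuous.comp hAc).continuousOn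
    · intro r _
      have : deriv^[2] ψ r = deriv (deriv ψ) r := rfl
      rw [this, (hψ2 r).deriv]
      have := hLconv x t (A r) w hwne
      rwa [iteratedFDeriv_two_apply] at this
  have key := hconv.2 (Set.mem_univ (0:ℝ)) (Set.mem_univ (1:ℝ)) (by norm_num)
    (by norm_num : (0:ℝ) < 1/2) (by norm_num : (0:ℝ) < 1/2) (by norm_num)
  have e0 : ψ 0 = L x v₁ t := by simp [hψ, hA, hg]
  have e1 : ψ 1 = L x v₂ t := by simp [hψ, hA, hg, hw]
  have earg : (1/2 : ℝ) • (0:ℝ) + (1/2 : ℝ) • (1:ℝ) = (1/2 : ℝ) := by norm_num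
  have eA : A (1/2 : ℝ) = (1/2 : ℝ) • v₁ + (1/2 : ℝ) • v₂ := by
    simp only [hA, hw, smul_sub]
    module
  rw [earg] at key
  have : ψ (1/2 : ℝ) = L x ((1/2 : ℝ) • v₁ + (1/2 : ℝ) • v₂) t := by
    simp only [hψ, Function.comp_apply, eA, hg]
  rw [this, e0, e1] at key
  simpa [smul_eq_mul] using key

theorem max_unique (L : Evec n → Evec n → ℝ → ℝ)
    (hLsm : ContDiff ℝ 2 (fun q : Evec n × Evec n × ℝ => L q.1 q.2.1 q.2.2))
    (hLconv : ∀ (x : Evec n) (t : ℝ) (v w : Evec n), w ≠ 0 →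
      0 < iteratedFDeriv ℝ 2 (fun v' => L x v' t) v ![w, w])
    (x p : Evec n) (t : ℝ) (v₁ v₂ : Evec n)
    (h₁ : ∀ w, (⟪p, w⟫ - L x w t) ≤ (⟪p, v₁⟫ - L x v₁ t))
    (h₂ : ∀ w, (⟪p, w⟫ - L x w t) ≤ (⟪p, v₂⟫ - L x v₂ t)) : v₁ = v₂ := by
  by_contra hne
  have hmid := L_strict_mid L hLsm hLconv x t v₁ v₂ hne
  have e1 : (⟪p, v₁⟫ - L x v₁ t) = (⟪p, v₂⟫ - L x v₂ t) := le_antisymm (h₂ v₁) (h₁ v₂)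
  have h3 := h₁ ((1/2 : ℝ) • v₁ + (1/2 : ℝ) • v₂)
  have hin : ⟪p, (1/2 : ℝ) • v₁ + (1/2 : ℝ) • v₂⟫
      = (1/2 : ℝ) * ⟪p, v₁⟫ + (1/2 : ℝ) * ⟪p, v₂⟫ := by
    rw [inner_add_right, real_inner_smul_right, real_inner_smul_right]
  rw [hin] at h3
  linarith
theorem Mleg_bound (L : Evec n → Evec n → ℝ → ℝ)
    (hLc : Continuous fun q : Evec n × Evec n × ℝ => L q.1 q.2.1 q.2.2)
    (hLsuper : ∀ k : ℝ, 0 ≤ k → ∃ C : ℝ, ∀ x v t, k * ‖v‖ - C ≤ L x v t)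
    (x₀ p₀ : Evec n) (t₀ : ℝ) :
    ∃ R : ℝ, ∀ x p t, ‖x - x₀‖ ≤ 1 → ‖p - p₀‖ ≤ 1 → |t - t₀| ≤ 1 →
      ‖Mleg L x p t‖ ≤ R := by
  obtain ⟨C, hC⟩ := hLsuper (‖p₀‖ + 2) (by positivity)
  have hK : IsCompact ((Metric.closedBall x₀ 1) ×ˢ (({(0:Evec n)} : Set (Evec n)) ×ˢ
      Set.Icc (t₀-1) (t₀+1))) :=
    (isCompact_closedBall _ _).prod (isCompact_singleton.prod isCompact_Icc)
  obtain ⟨D, hD⟩ := hK.exists_bound_of_continuousOn hLc.continuousOn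
  refine ⟨C + D, fun x p t hx hp ht => ?_⟩
  set M := Mleg L x p t with hM
  have hspec := Mleg_spec L hLc hLsuper x p t
  have h0 : (⟪p, (0:Evec n)⟫ - L x 0 t) ≤ ⟪p, M⟫ - L x M t := hspec 0
  have hmem : ((x, ((0:Evec n), t)) : Evec n × Evec n × ℝ) ∈
      (Metric.closedBall x₀ 1) ×ˢ (({(0:Evec n)} : Set (Evec n)) ×ˢ Set.Icc (t₀-1) (t₀+1)) := by
    refine ⟨by simpa [Metric.mem_closedBall, dist_eq_norm] using hx, rfl, ?_⟩
    constructor <;> [linarith [abs_le.1 ht |>.1]; linarith [abs_le.1 ht |>.2]]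
  have hDL : |L x 0 t| ≤ D := by simpa [Real.norm_eq_abs] using hD _ hmem
  have hnp : ‖p‖ ≤ ‖p₀‖ + 1 := by
    have := norm_sub_norm_le p p₀
    linarith
  have h1 : ⟪p, M⟫ ≤ ‖p‖ * ‖M‖ := real_inner_le_norm p M
  have h2 := hC x M t
  have h3 : ⟪p, (0:Evec n)⟫ = 0 := inner_zero_right p
  have habs := abs_le.1 hDL
  nlinarith [norm_nonneg M]

set_option maxHeartbeats 1000000 in
theorem Mleg_continuous (L : Evec n → Evec n → ℝ → ℝ)
    (hLsm : ContDiff ℝ 2 (fun q : Evec n × Evec n × ℝ => L q.1 q.2.1 q.2.2))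
    (hLconv : ∀ (x : Evec n) (t : ℝ) (v w : Evec n), w ≠ 0 →
      0 < iteratedFDeriv ℝ 2 (fun v' => L x v' t) v ![w, w])
    (hLsuper : ∀ k : ℝ, 0 ≤ k → ∃ C : ℝ, ∀ x v t, k * ‖v‖ - C ≤ L x v t) :
    Continuous (fun z : Evec n × Evec n × ℝ => Mleg L z.1 z.2.1 z.2.2) := by
  have hLc := hLsm.continuous
  rw [continuous_iff_continuousAt]
  rintro ⟨x₀, p₀, t₀⟩
  obtain ⟨R, hR⟩ := Mleg_bound L hLc hLsuper x₀ p₀ t₀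
  unfold ContinuousAt
  apply tendsto_of_subseq_tendsto
  intro ns hns
  -- the three components of ns converge
  have h1 : Tendsto (fun k => (ns k).1) atTop (𝓝 x₀) := (continuous_fst.tendsto _).comp hns
  have h2 : Tendsto (fun k => (ns k).2.1) atTop (𝓝 p₀) :=
    ((continuous_fst.comp continuous_snd).tendsto _).comp hns
  have h3 : Tendsto (fun k => (ns k).2.2) atTop (𝓝 t₀) :=
    ((continuous_snd.comp continuous_snd).tendsto _).comp hns
  have hev : ∀ᶠ k in atTop, ‖Mleg L (ns k).1 (ns k).2.1 (ns k).2.2‖ ≤ R := by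
    have e1 : ∀ᶠ k in atTop, (ns k).1 ∈ Metric.closedBall x₀ 1 :=
      h1.eventually (Metric.closedBall_mem_nhds x₀ one_pos)
    have e2 : ∀ᶠ k in atTop, (ns k).2.1 ∈ Metric.closedBall p₀ 1 :=
      h2.eventually (Metric.closedBall_mem_nhds p₀ one_pos)
    have e3 : ∀ᶠ k in atTop, (ns k).2.2 ∈ Metric.closedBall t₀ 1 :=
      h3.eventually (Metric.closedBall_mem_nhds t₀ one_pos)
    filter_upwards [e1, e2, e3] with k hk1 hk2 hk3
    exact hR _ _ _ (by simpa [Metric.mem_closedBall, dist_eq_norm] using hk1)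
      (by simpa [Metric.mem_closedBall, dist_eq_norm] using hk2)
      (by simpa [Metric.mem_closedBall, Real.dist_eq] using hk3)
  obtain ⟨K, hK⟩ := eventually_atTop.1 hev
  set y : ℕ → Evec n := fun j => Mleg L (ns (j + K)).1 (ns (j + K)).2.1 (ns (j + K)).2.2 with hy
  have hymem : ∀ j, y j ∈ Metric.closedBall (0 : Evec n) R := by
    intro j
    simpa [Metric.mem_closedBall, dist_zero_right] using hK (j + K) (Nat.le_add_left K j)
  obtain ⟨a, _, φs, hφs, hconv⟩ := (isCompact_closedBall (0 : Evec n) R).tendsto_subseq hymem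
  -- the corresponding parameter subsequence converges to (x₀, p₀, t₀)
  have hsub : Tendsto (fun j => ns (φs j + K)) atTop (𝓝 (x₀, p₀, t₀)) :=
    hns.comp (tendsto_atTop_mono (fun j => Nat.le_add_right _ _) hφs.tendsto_atTop)
  have hx' : Tendsto (fun j => (ns (φs j + K)).1) atTop (𝓝 x₀) :=
    (continuous_fst.tendsto _).comp hsub
  have hp' : Tendsto (fun j => (ns (φs j + K)).2.1) atTop (𝓝 p₀) :=
    ((continuous_fst.comp continuous_snd).tendsto _).comp hsub
  have ht' : Tendsto (fun j => (ns (φs j + K)).2.2) atTop (𝓝 t₀) :=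
    ((continuous_snd.comp continuous_snd).tendsto _).comp hsub
  have hyconv : Tendsto (fun j => y (φs j)) atTop (𝓝 a) := hconv
  have hamax : ∀ w, (⟪p₀, w⟫ - L x₀ w t₀) ≤ (⟪p₀, a⟫ - L x₀ a t₀) := by
    intro w
    have hLt1 : Tendsto (fun j => L (ns (φs j + K)).1 w (ns (φs j + K)).2.2)
        atTop (𝓝 (L x₀ w t₀)) :=
      (hLc.tendsto (x₀, w, t₀)).comp (hx'.prodMk_nhds (tendsto_const_nhds.prodMk_nhds ht'))
    have hLt2 : Tendsto (fun j => L (ns (φs j + K)).1 (y (φs j)) (ns (φs j + K)).2.2)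
        atTop (𝓝 (L x₀ a t₀)) :=
      (hLc.tendsto (x₀, a, t₀)).comp (hx'.prodMk_nhds (hyconv.prodMk_nhds ht'))
    have hL1 : Tendsto (fun j => (⟪(ns (φs j + K)).2.1, w⟫ - L (ns (φs j + K)).1 w
        (ns (φs j + K)).2.2)) atTop (𝓝 (⟪p₀, w⟫ - L x₀ w t₀)) :=
      (hp'.inner tendsto_const_nhds).sub hLt1
    have hL2 : Tendsto (fun j => (⟪(ns (φs j + K)).2.1, y (φs j)⟫ -
        L (ns (φs j + K)).1 (y (φs j)) (ns (φs j + K)).2.2)) atTop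
        (𝓝 (⟪p₀, a⟫ - L x₀ a t₀)) :=
      (hp'.inner hyconv).sub hLt2
    refine le_of_tendsto_of_tendsto' hL1 hL2 (fun j => ?_)
    exact Mleg_spec L hLc hLsuper (ns (φs j + K)).1 (ns (φs j + K)).2.1 (ns (φs j + K)).2.2 w
  have haeq : a = Mleg L x₀ p₀ t₀ :=
    max_unique L hLsm hLconv x₀ p₀ t₀ a _ hamax (Mleg_spec L hLc hLsuper x₀ p₀ t₀)
  have hfin : Tendsto (fun j => Mleg L (ns (φs j + K)).1 (ns (φs j + K)).2.1
      (ns (φs j + K)).2.2) atTop (𝓝 (Mleg L x₀ p₀ t₀)) := by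
    rw [← haeq]; exact hyconv
  exact ⟨fun j => φs j + K, hfin⟩
set_option maxHeartbeats 2000000 in
theorem hasGradientAt_Ham (L : Evec n → Evec n → ℝ → ℝ)
    (hLsm : ContDiff ℝ 2 (fun q : Evec n × Evec n × ℝ => L q.1 q.2.1 q.2.2))
    (hLconv : ∀ (x : Evec n) (t : ℝ) (v w : Evec n), w ≠ 0 →
      0 < iteratedFDeriv ℝ 2 (fun v' => L x v' t) v ![w, w])
    (hLsuper : ∀ k : ℝ, 0 ≤ k → ∃ C : ℝ, ∀ x v t, k * ‖v‖ - C ≤ L x v t)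
    (x p : Evec n) (t : ℝ) :
    HasGradientAt (fun q => Ham L x q t) (Mleg L x p t) p := by
  have hLc := hLsm.continuous
  rw [hasGradientAt_iff_hasFDerivAt, hasFDerivAt_iff_isLittleO_nhds_zero,
    Asymptotics.isLittleO_iff]
  intro c hc
  have hMc : ContinuousAt (fun h : Evec n => Mleg L x (p + h) t) 0 := by
    have h1 : Continuous (fun h : Evec n => Mleg L x (p + h) t) :=
      (Mleg_continuous L hLsm hLconv hLsuper).comp
        (continuous_const.prodMk ((continuous_const.add continuous_id).prodMk
          continuous_const))
    exact h1.continuousAt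
  have hev : ∀ᶠ h in 𝓝 (0 : Evec n), Mleg L x (p + h) t ∈
      Metric.closedBall (Mleg L x p t) c := by
    have h0 : Mleg L x (p + 0) t = Mleg L x p t := by rw [add_zero]
    have := hMc.tendsto
    rw [h0] at this
    exact this.eventually (Metric.closedBall_mem_nhds _ hc)
  filter_upwards [hev] with h hh
  set M := Mleg L x p t with hM
  set M' := Mleg L x (p + h) t with hM'
  have e0 : Ham L x p t = ⟪p, M⟫ - L x M t := Ham_eq L hLc hLsuper x p t
  have e1 : Ham L x (p + h) t = ⟪p + h, M'⟫ - L x M' t := Ham_eq L hLc hLsuper x (p + h) t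
  have low : Ham L x p t + ⟪h, M⟫ ≤ Ham L x (p + h) t := by
    have h2 := Mleg_spec L hLc hLsuper x (p + h) t M
    rw [← e1] at h2
    have h3 : ⟪p + h, M⟫ = ⟪p, M⟫ + ⟪h, M⟫ := inner_add_left p h M
    linarith [h2, e0.ge]
  have high : Ham L x (p + h) t ≤ Ham L x p t + ⟪h, M'⟫ := by
    have h2 := Mleg_spec L hLc hLsuper x p t M'
    rw [← e0] at h2
    have h3 : ⟪p + h, M'⟫ = ⟪p, M'⟫ + ⟪h, M'⟫ := inner_add_left p h M'
    linarith [e1.le]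
  have hdist : ‖M' - M‖ ≤ c := by
    simpa [Metric.mem_closedBall, dist_eq_norm] using hh
  have hCS : ⟪h, M' - M⟫ ≤ ‖h‖ * ‖M' - M‖ := real_inner_le_norm h (M' - M)
  have hsub : ⟪h, M' - M⟫ = ⟪h, M'⟫ - ⟪h, M⟫ := inner_sub_right h M' M
  have hdual : (InnerProductSpace.toDual ℝ (Evec n) M) h = ⟪M, h⟫ :=
    InnerProductSpace.toDual_apply_apply
  rw [hdual, Real.norm_eq_abs, abs_le]
  have hcomm : ⟪M, h⟫ = ⟪h, M⟫ := real_inner_comm h M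
  constructor
  · have h6 : (0:ℝ) ≤ Ham L x (p + h) t - Ham L x p t - ⟪h, M⟫ := by linarith
    rw [hcomm]
    nlinarith [mul_nonneg hc.le (norm_nonneg h)]
  · have h4 : Ham L x (p + h) t - Ham L x p t - ⟪h, M⟫ ≤ ‖h‖ * ‖M' - M‖ := by
      nlinarith [hCS]
    have h5 : ‖h‖ * ‖M' - M‖ ≤ c * ‖h‖ := by
      rw [mul_comm]
      exact mul_le_mul_of_nonneg_right hdist (norm_nonneg h)
    rw [hcomm]; linarith

theorem gradient_Ham_eq (L : Evec n → Evec n → ℝ → ℝ)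
    (hLsm : ContDiff ℝ 2 (fun q : Evec n × Evec n × ℝ => L q.1 q.2.1 q.2.2))
    (hLconv : ∀ (x : Evec n) (t : ℝ) (v w : Evec n), w ≠ 0 →
      0 < iteratedFDeriv ℝ 2 (fun v' => L x v' t) v ![w, w])
    (hLsuper : ∀ k : ℝ, 0 ≤ k → ∃ C : ℝ, ∀ x v t, k * ‖v‖ - C ≤ L x v t)
    (x p : Evec n) (t : ℝ) :
    gradient (fun q => Ham L x q t) p = Mleg L x p t :=
  (hasGradientAt_Ham L hLsm hLconv hLsuper x p t).gradient
theorem ACOn_of_le {γ γ' : ℝ → Evec n} {S : Set ℝ}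
    (h : ∀ a ∈ S, ∀ b ∈ S, a ≤ b →
      IntervalIntegrable γ' MeasureTheory.volume a b ∧ γ b = γ a + ∫ τ in a..b, γ' τ) :
    ACOn γ γ' S := by
  intro a ha b hb
  rcases le_total a b with hab | hba
  · exact h a ha b hb hab
  · obtain ⟨hi, he⟩ := h b hb a ha hba
    refine ⟨hi.symm, ?_⟩
    rw [intervalIntegral.integral_symm, he]
    abel

theorem periodic_bound (G : ℝ → ℝ) (hGc : Continuous G) (hGp : ∀ t, G (t + 1) = G t) :
    ∃ B : ℝ, ∀ t, |G t| ≤ B := by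
  obtain ⟨B, hB⟩ := (isCompact_Icc (a := (0:ℝ)) (b := 1)).exists_bound_of_continuousOn
    hGc.continuousOn
  refine ⟨B, fun t => ?_⟩
  have hper : Function.Periodic G 1 := hGp
  have h1 : G (t - (⌊t⌋ : ℤ) * 1) = G t := hper.sub_int_mul_eq ⌊t⌋
  have h2 : t - (⌊t⌋ : ℤ) * 1 ∈ Set.Icc (0:ℝ) 1 := by
    constructor
    · have := Int.floor_le t; simp only [mul_one]; linarith
    · have := Int.lt_floor_add_one t; simp only [mul_one]; linarith
  have := hB _ h2
  rw [h1] at this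
  simpa [Real.norm_eq_abs] using this

theorem integrableOn_exp_mul_Iic' (m b : ℝ) (hm : 0 < m) :
    MeasureTheory.IntegrableOn (fun σ : ℝ => Real.exp (m * σ)) (Set.Iic b)
      MeasureTheory.volume := by
  have hder : ∀ σ : ℝ, HasDerivAt (fun τ => Real.exp (m * τ) / m) (Real.exp (m * σ)) σ := by
    intro σ
    have h1 : HasDerivAt (fun τ : ℝ => m * τ) m σ := by
      simpa using (hasDerivAt_id σ).const_mul m
    have h2 := h1.exp
    have h3 := h2.div_const m
    simpa [mul_comm, mul_div_assoc, mul_div_cancel_left₀ _ hm.ne'] using h3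
  have hcont : Continuous fun σ : ℝ => Real.exp (m * σ) :=
    (continuous_const.mul continuous_id).rexp
  apply MeasureTheory.integrableOn_Iic_of_intervalIntegral_norm_bounded
    (Real.exp (m * b) / m) b (l := atTop) (a := fun k : ℕ => b - k)
  · intro k
    exact hcont.integrableOn_Ioc
  · have h1 : Tendsto (fun k : ℕ => -(k : ℝ)) atTop atBot :=
      tendsto_neg_atTop_atBot.comp tendsto_natCast_atTop_atTop
    have h2 := tendsto_atBot_add_const_left atTop b h1
    simpa [sub_eq_add_neg] using h2
  · filter_upwards with k
    have hki : IntervalIntegrable (fun σ : ℝ => Real.exp (m * σ))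
        MeasureTheory.volume (b - k) b := hcont.intervalIntegrable _ _
    have heq : ∫ σ in (b - (k:ℝ))..b, ‖Real.exp (m * σ)‖ =
        ∫ σ in (b - (k:ℝ))..b, Real.exp (m * σ) := by
      congr 1; funext σ; exact Real.norm_of_nonneg (Real.exp_pos _).le
    rw [heq, intervalIntegral.integral_eq_sub_of_hasDerivAt (fun σ _ => hder σ) hki]
    have := Real.exp_pos (m * (b - k))
    have h3 : 0 < Real.exp (m * (b - k)) / m := by positivity
    linarith

end AuxiliaryLemmas

attribute [irreducible] Mleg Ham

set_option maxHeartbeats 1000000 in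
/-- If `(x,p,u)` solves the extended dissipative Hamiltonian
system on `(-∞, s]`, with `u(s) ≤ u_α⁻(x(s), s)` and
`liminf_{t→-∞} e^{F(t)} |u(t)| = 0`, then `u(s) = u_α⁻(x(s), s)` and `x(·)` is a
backward calibrated curve of `u_α⁻` ending at `(x(s), s)`. -/
theorem extended_flow_below_graph_is_calibrated
    (n : ℕ) (hn : 1 ≤ n)
    (f F : ℝ → ℝ)
    (hf : Continuous f) (hfper : ∀ t, f (t + 1) = f t)
    (hfmean : 0 < ∫ t in (0:ℝ)..1, f t)
    (hF : ∀ t, F t = ∫ τ in (0:ℝ)..t, f τ)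
    (L : Evec n → Evec n → ℝ → ℝ)
    (hLsm : ContDiff ℝ 2 (fun q : Evec n × Evec n × ℝ => L q.1 q.2.1 q.2.2))
    (hLxper : ∀ (k : Fin n → ℤ) (x v : Evec n) (t : ℝ), L (x + intVec k) v t = L x v t)
    (hLtper : ∀ (x v : Evec n) (t : ℝ), L x v (t + 1) = L x v t)
    (hLconv : ∀ (x : Evec n) (t : ℝ) (v w : Evec n), w ≠ 0 →
      0 < iteratedFDeriv ℝ 2 (fun v' => L x v' t) v ![w, w])
    (hLsuper : ∀ k : ℝ, 0 ≤ k → ∃ C : ℝ, ∀ x v t, k * ‖v‖ - C ≤ L x v t)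
    (hcomp : ∀ (x₀ v₀ : Evec n) (t₀ : ℝ), ∃ γ : ℝ → Evec n,
      ContDiff ℝ 2 γ ∧ γ t₀ = x₀ ∧ deriv γ t₀ = v₀ ∧
      ∀ t : ℝ, HasDerivAt
        (fun σ => fderiv ℝ (fun v => L (γ σ) v σ) (deriv γ σ))
        (fderiv ℝ (fun y => L y (deriv γ t) t) (γ t)
          - f t • fderiv ℝ (fun v => L (γ t) v t) (deriv γ t)) t)
    (α : ℝ) (s : ℝ) (X P : ℝ → Evec n) (U : ℝ → ℝ)
    (hX : ∀ t ∈ Set.Iic s, HasDerivWithinAt X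
      (gradient (fun p => Ham L (X t) p t) (P t)) (Set.Iic s) t)
    (hP : ∀ t ∈ Set.Iic s, HasDerivWithinAt P
      (-(gradient (fun y => Ham L y (P t) t) (X t)) - f t • P t) (Set.Iic s) t)
    (hU : ∀ t ∈ Set.Iic s, HasDerivWithinAt U
      (⟪gradient (fun p => Ham L (X t) p t) (P t), P t⟫
        - Ham L (X t) (P t) t + α - f t * U t) (Set.Iic s) t)
    (hle : U s ≤ uWK F L α (X s) s)
    (hliminf : ∀ ε : ℝ, 0 < ε → ∀ T : ℝ, ∃ t : ℝ, t ≤ T ∧ Real.exp (F t) * |U t| < ε) :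
    U s = uWK F L α (X s) s ∧
    ∀ t₁ t₂ : ℝ, t₁ ≤ t₂ → t₂ ≤ s →
      Real.exp (F t₂) * uWK F L α (X t₂) t₂ - Real.exp (F t₁) * uWK F L α (X t₁) t₁ =
        ∫ τ in t₁..t₂, Real.exp (F τ) *
          (L (X τ) (gradient (fun p => Ham L (X τ) p τ) (P τ)) τ + α) := by
  have hLc : Continuous (fun q : Evec n × Evec n × ℝ => L q.1 q.2.1 q.2.2) := hLsm.continuous
  set V : ℝ → Evec n := fun τ => Mleg L (X τ) (P τ) τ with hV
  have hgrad : ∀ τ : ℝ, gradient (fun p => Ham L (X τ) p τ) (P τ) = V τ :=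
    fun τ => gradient_Ham_eq L hLsm hLconv hLsuper (X τ) (P τ) τ
  have hLeg : ∀ τ : ℝ, ⟪V τ, P τ⟫ - Ham L (X τ) (P τ) τ = L (X τ) (V τ) τ := by
    intro τ
    have h1 := Ham_eq L hLc hLsuper (X τ) (P τ) τ
    have hcm : ⟪V τ, P τ⟫ = ⟪P τ, V τ⟫ := real_inner_comm _ _
    rw [hcm, h1]; ring
  have hX' : ∀ t ∈ Set.Iic s, HasDerivWithinAt X (V t) (Set.Iic s) t := by
    intro t ht; have h0 := hX t ht; rwa [hgrad t] at h0
  have hU' : ∀ t ∈ Set.Iic s, HasDerivWithinAt U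
      (L (X t) (V t) t + α - f t * U t) (Set.Iic s) t := by
    intro t ht
    have h0 := hU t ht
    rw [hgrad t, hLeg t] at h0
    exact h0
  -- facts about F
  have hFder : ∀ t : ℝ, HasDerivAt F (f t) t := by
    intro t
    have := (hf.integral_hasStrictDerivAt 0 t).hasDerivAt
    rw [funext hF]
    exact this
  have hFcont : Continuous F := by
    rw [continuous_iff_continuousAt]; exact fun t => (hFder t).continuousAt
  set m : ℝ := ∫ t in (0:ℝ)..1, f t with hmdef
  have hm0 : 0 < m := hfmean
  have hFadd : ∀ t : ℝ, F (t + 1) = F t + m := by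
    intro t
    rw [hF, hF]
    have h1 : ∫ τ in (0:ℝ)..(t+1), f τ = (∫ τ in (0:ℝ)..t, f τ) + ∫ τ in t..(t+1), f τ :=
      (intervalIntegral.integral_add_adjacent_intervals (hf.intervalIntegrable _ _)
        (hf.intervalIntegrable _ _)).symm
    rw [h1]
    congr 1
    have hper : Function.Periodic f 1 := hfper
    have h2 := hper.intervalIntegral_add_eq t 0
    simpa using h2
  obtain ⟨B, hB⟩ : ∃ B : ℝ, ∀ t, |F t - m * t| ≤ B := by
    apply periodic_bound (fun t => F t - m * t)
    · exact hFcont.sub (continuous_const.mul continuous_id)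
    · intro t; rw [hFadd]; ring
  have hexpF_int : ∀ b : ℝ, MeasureTheory.IntegrableOn (fun σ => Real.exp (F σ))
      (Set.Iic b) MeasureTheory.volume := by
    intro b
    have h1 := (integrableOn_exp_mul_Iic' m b hm0).const_mul (Real.exp B)
    apply MeasureTheory.Integrable.mono' h1
    · exact (hFcont.rexp).aestronglyMeasurable.restrict
    · filter_upwards with σ
      rw [Real.norm_of_nonneg (Real.exp_pos _).le, ← Real.exp_add]
      apply Real.exp_le_exp.2
      have := (abs_le.1 (hB σ)).2; linarith
  -- continuity on Iic s
  have hXc : ContinuousOn X (Set.Iic s) := fun t ht => (hX' t ht).continuousWithinAt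
  have hPc : ContinuousOn P (Set.Iic s) := fun t ht => (hP t ht).continuousWithinAt
  have hUc : ContinuousOn U (Set.Iic s) := fun t ht => (hU' t ht).continuousWithinAt
  have hVc : ContinuousOn V (Set.Iic s) := by
    have hMc := Mleg_continuous L hLsm hLconv hLsuper
    exact hMc.comp_continuousOn (hXc.prodMk (hPc.prodMk continuousOn_id))
  set hfun : ℝ → ℝ := fun σ => Real.exp (F σ) * (L (X σ) (V σ) σ + α) with hhfun
  have hhc : ContinuousOn hfun (Set.Iic s) := by
    apply ContinuousOn.mul (hFcont.rexp.continuousOn)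
    exact (hLc.comp_continuousOn (hXc.prodMk (hVc.prodMk continuousOn_id))).add continuousOn_const
  set E : ℝ → ℝ := fun τ => Real.exp (F τ) * U τ with hE
  have hEder : ∀ t ∈ Set.Iic s, HasDerivWithinAt E (hfun t) (Set.Iic s) t := by
    intro t ht
    have h1 : HasDerivWithinAt (fun τ => Real.exp (F τ)) (Real.exp (F t) * f t)
        (Set.Iic s) t := ((hFder t).exp).hasDerivWithinAt
    have h2 : HasDerivWithinAt (fun τ => Real.exp (F τ) * U τ) _ (Set.Iic s) t :=
      h1.mul (hU' t ht)
    convert h2 using 1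
    simp only [hhfun]; ring
  have hEc : ContinuousOn E (Set.Iic s) := fun t ht => (hEder t ht).continuousWithinAt
  -- FTC on compact subintervals of Iic s
  have key : ∀ a b : ℝ, a ≤ b → b ≤ s → ∫ τ in a..b, hfun τ = E b - E a := by
    intro a b hab hbs
    have hsub : Set.Icc a b ⊆ Set.Iic s := fun x hx => le_trans hx.2 hbs
    apply intervalIntegral.integral_eq_sub_of_hasDeriv_right_of_le hab
    · exact hEc.mono hsub
    · intro x hx
      have hxs : x < s := lt_of_lt_of_le hx.2 hbs
      exact ((hEder x hxs.le).hasDerivAt (Iic_mem_nhds hxs)).hasDerivWithinAt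
    · refine (hhc.mono ?_).intervalIntegrable
      rw [Set.uIcc_of_le hab]; exact hsub
  have hACX : ∀ t : ℝ, t ≤ s → ACOn X V (Set.Iic t) := by
    intro t hts
    apply ACOn_of_le
    intro a ha b hb hab
    have hsub : Set.Icc a b ⊆ Set.Iic s := fun x hx =>
      le_trans hx.2 (le_trans (hb : b ≤ t) hts)
    have hint : IntervalIntegrable V MeasureTheory.volume a b := by
      refine (hVc.mono ?_).intervalIntegrable
      rw [Set.uIcc_of_le hab]; exact hsub
    refine ⟨hint, ?_⟩
    have h1 : ∫ τ in a..b, V τ = X b - X a := by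
      apply intervalIntegral.integral_eq_sub_of_hasDeriv_right_of_le hab
      · exact hXc.mono hsub
      · intro x hx
        have hxs : x < s := lt_of_lt_of_le hx.2 (le_trans (hb : b ≤ t) hts)
        exact ((hX' x hxs.le).hasDerivAt (Iic_mem_nhds hxs)).hasDerivWithinAt
      · exact hint
    rw [h1]; abel
  -- the tail sequence
  have hseq : ∀ k : ℕ, ∃ t : ℝ, t ≤ min (-(k:ℝ)) s ∧ Real.exp (F t) * |U t| < 1/(k+1) :=
    fun k => hliminf (1/(k+1)) (by positivity) _
  choose T hT1 hT2 using hseq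
  have hTs : ∀ k, T k ≤ s := fun k => le_trans (hT1 k) (min_le_right _ _)
  have hTbot : Tendsto T atTop atBot := by
    apply tendsto_atBot_mono (fun k => le_trans (hT1 k) (min_le_left _ _))
    exact tendsto_neg_atTop_atBot.comp tendsto_natCast_atTop_atTop
  have hET1 : ∀ k : ℕ, |E (T k)| ≤ 1/(k+1) := by
    intro k
    have : |E (T k)| = Real.exp (F (T k)) * |U (T k)| := by
      rw [hE, abs_mul, abs_of_pos (Real.exp_pos _)]
    rw [this]; exact (hT2 k).le
  have hET0 : Tendsto (fun k => E (T k)) atTop (𝓝 0) := by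
    rw [tendsto_zero_iff_norm_tendsto_zero]
    apply squeeze_zero (fun k => norm_nonneg _) (fun k => ?_)
      tendsto_one_div_add_atTop_nhds_zero_nat
    rw [Real.norm_eq_abs]; exact hET1 k
  -- lower bound constants
  obtain ⟨C₀, hC₀⟩ := hLsuper 0 le_rfl
  set c : ℝ := |C₀| + |α| + 1 with hcdef
  have hcpos : 0 < c := by positivity
  have hLlow : ∀ (x v : Evec n) (t : ℝ), -c ≤ L x v t + α := by
    intro x v t
    have h1 := hC₀ x v t
    have h2 : -|C₀| ≤ -C₀ := neg_le_neg (le_abs_self C₀)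
    have h3 : -|α| ≤ α := neg_abs_le α
    simp only [zero_mul, zero_sub] at h1
    simp only [hcdef]; linarith
  have hlow : ∀ σ : ℝ, -(c * Real.exp (F σ)) ≤ hfun σ := by
    intro σ
    have h2 := mul_le_mul_of_nonneg_left (hLlow (X σ) (V σ) σ) (Real.exp_pos (F σ)).le
    simp only [hhfun]
    calc -(c * Real.exp (F σ)) = Real.exp (F σ) * (-c) := by ring
    _ ≤ Real.exp (F σ) * (L (X σ) (V σ) σ + α) := h2
  have hnormh : ∀ σ : ℝ, ‖hfun σ‖ ≤ hfun σ + 2 * (c * Real.exp (F σ)) := by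
    intro σ
    have h1 := hlow σ
    have h2 : 0 ≤ c * Real.exp (F σ) := by positivity
    rw [Real.norm_eq_abs, abs_le]
    constructor <;> linarith
  -- integrability of hfun on Iic t and value of the improper integral
  have hint_h : ∀ t : ℝ, t ≤ s → MeasureTheory.IntegrableOn hfun (Set.Iic t)
      MeasureTheory.volume ∧ ∫ σ in Set.Iic t, hfun σ = E t := by
    intro t hts
    have hIoc : ∀ k : ℕ, MeasureTheory.IntegrableOn hfun (Set.Ioc (T k) t)
        MeasureTheory.volume := by
      intro k
      rcases le_or_gt (T k) t with hk | hk
      · have h1 : MeasureTheory.IntegrableOn hfun (Set.Icc (T k) t) MeasureTheory.volume :=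
          (hhc.mono (fun x hx => le_trans hx.2 hts)).integrableOn_compact isCompact_Icc
        exact h1.mono_set Set.Ioc_subset_Icc_self
      · rw [Set.Ioc_eq_empty (not_lt.2 hk.le)]
        exact MeasureTheory.integrableOn_empty
    have hbound : ∀ᶠ k in atTop, (∫ σ in (T k)..t, ‖hfun σ‖) ≤
        E t + 1 + (2*c) * ∫ σ in Set.Iic t, Real.exp (F σ) := by
      filter_upwards [hTbot.eventually (eventually_le_atBot t)] with k hk
      have hIcc : Set.Icc (T k) t ⊆ Set.Iic s := fun x hx => le_trans hx.2 hts
      have hfun_int : IntervalIntegrable hfun MeasureTheory.volume (T k) t := by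
        refine (hhc.mono ?_).intervalIntegrable
        rw [Set.uIcc_of_le hk]; exact hIcc
      have hexp_int : IntervalIntegrable (fun σ => (2*c) * Real.exp (F σ))
          MeasureTheory.volume (T k) t :=
        (continuous_const.mul hFcont.rexp).intervalIntegrable _ _
      have h1 : (∫ σ in (T k)..t, ‖hfun σ‖) ≤
          ∫ σ in (T k)..t, (hfun σ + (2*c) * Real.exp (F σ)) := by
        apply intervalIntegral.integral_mono_on hk hfun_int.norm (hfun_int.add hexp_int)
        intro x _
        have := hnormh x
        calc ‖hfun x‖ ≤ hfun x + 2 * (c * Real.exp (F x)) := this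
        _ = hfun x + (2*c) * Real.exp (F x) := by ring
      have h2 : ∫ σ in (T k)..t, (hfun σ + (2*c) * Real.exp (F σ)) =
          (E t - E (T k)) + (2*c) * ∫ σ in (T k)..t, Real.exp (F σ) := by
        rw [intervalIntegral.integral_add hfun_int hexp_int, key (T k) t hk hts,
          intervalIntegral.integral_const_mul]
      have h3 : ∫ σ in (T k)..t, Real.exp (F σ) ≤ ∫ σ in Set.Iic t, Real.exp (F σ) := by
        rw [intervalIntegral.integral_of_le hk]
        apply MeasureTheory.setIntegral_mono_set (hexpF_int t)
        · filter_upwards with σ using (Real.exp_pos _).le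
        · exact HasSubset.Subset.eventuallyLE (fun x hx => hx.2)
      have h4 : -(E (T k)) ≤ 1 := by
        have h5 := (abs_le.1 (hET1 k)).1
        have h6 : (1:ℝ)/(k+1) ≤ 1 := by
          rw [div_le_one (by positivity)]
          have : (0:ℝ) ≤ (k:ℝ) := Nat.cast_nonneg k
          linarith
        linarith
      have h7 : (2*c) * (∫ σ in (T k)..t, Real.exp (F σ)) ≤
          (2*c) * ∫ σ in Set.Iic t, Real.exp (F σ) :=
        mul_le_mul_of_nonneg_left h3 (by positivity)
      linarith
    have hint : MeasureTheory.IntegrableOn hfun (Set.Iic t) MeasureTheory.volume :=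
      MeasureTheory.integrableOn_Iic_of_intervalIntegral_norm_bounded _ t hIoc hTbot hbound
    have hval1 := MeasureTheory.intervalIntegral_tendsto_integral_Iic t hint hTbot
    have hval2 : Tendsto (fun k => ∫ σ in (T k)..t, hfun σ) atTop (𝓝 (E t)) := by
      have hev : (fun k => E t - E (T k)) =ᶠ[atTop] fun k => ∫ σ in (T k)..t, hfun σ := by
        filter_upwards [hTbot.eventually (eventually_le_atBot t)] with k hk
        rw [key (T k) t hk hts]
      have h5 : Tendsto (fun k => E t - E (T k)) atTop (𝓝 (E t)) := by
        simpa using tendsto_const_nhds.sub hET0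
      exact h5.congr' hev
    exact ⟨hint, tendsto_nhds_unique hval1 hval2⟩
  -- membership of U t
  have hmem : ∀ t : ℝ, t ≤ s → U t ∈ wkSet F L α (X t) t := by
    intro t hts
    obtain ⟨hint, hval⟩ := hint_h t hts
    have heq : ∀ σ : ℝ, Real.exp (F σ - F t) * (L (X σ) (V σ) σ + α)
        = Real.exp (-(F t)) * hfun σ := by
      intro σ
      simp only [hhfun]
      rw [Real.exp_sub, Real.exp_neg]
      ring
    refine ⟨X, V, hACX t hts, rfl, ?_, ?_⟩
    · have h2 : MeasureTheory.IntegrableOn (fun σ => Real.exp (-(F t)) * hfun σ)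
          (Set.Iic t) MeasureTheory.volume := hint.const_mul _
      exact h2.congr_fun (fun σ _ => (heq σ).symm) measurableSet_Iic
    · have h1 : ∫ σ in Set.Iic t, Real.exp (F σ - F t) * (L (X σ) (V σ) σ + α)
          = ∫ σ in Set.Iic t, Real.exp (-(F t)) * hfun σ :=
        MeasureTheory.setIntegral_congr_fun measurableSet_Iic (fun σ _ => heq σ)
      rw [h1, MeasureTheory.integral_const_mul, hval, hE]
      rw [← mul_assoc, ← Real.exp_add, neg_add_cancel, Real.exp_zero, one_mul]
  -- bounded below
  have hbdd : ∀ (x : Evec n) (t : ℝ), BddBelow (wkSet F L α x t) := by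
    intro x t
    have hWint : MeasureTheory.IntegrableOn
        (fun σ => (-(c * Real.exp (-(F t)))) * Real.exp (F σ)) (Set.Iic t)
        MeasureTheory.volume := (hexpF_int t).const_mul _
    refine ⟨∫ σ in Set.Iic t, (-(c * Real.exp (-(F t)))) * Real.exp (F σ), ?_⟩
    rintro r ⟨γ, γ', hACγ, hγt, hintγ, rfl⟩
    refine MeasureTheory.setIntegral_mono hWint hintγ (fun σ => ?_)
    have h1 := hLlow (γ σ) (γ' σ) σ
    have h2 : Real.exp (F σ - F t) = Real.exp (-(F t)) * Real.exp (F σ) := by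
      rw [← Real.exp_add]; ring_nf
    calc (-(c * Real.exp (-(F t)))) * Real.exp (F σ)
        = (Real.exp (-(F t)) * Real.exp (F σ)) * (-c) := by ring
    _ ≤ (Real.exp (-(F t)) * Real.exp (F σ)) * (L (γ σ) (γ' σ) σ + α) :=
        mul_le_mul_of_nonneg_left h1 (by positivity)
    _ = Real.exp (F σ - F t) * (L (γ σ) (γ' σ) σ + α) := by rw [h2]
  have hle' : ∀ t : ℝ, t ≤ s → uWK F L α (X t) t ≤ U t := fun t hts =>
    csInf_le (hbdd _ _) (hmem t hts)
  -- the reverse inequality via concatenation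
  have hge : ∀ t : ℝ, t ≤ s → U t ≤ uWK F L α (X t) t := by
    intro t hts
    rcases eq_or_lt_of_le hts with rfl | hts'
    · exact hle
    apply le_csInf ⟨U t, hmem t hts⟩
    rintro r ⟨γ, γ', hACγ, hγt, hintγ, rfl⟩
    set r0 : ℝ := ∫ σ in Set.Iic t, Real.exp (F σ - F t) * (L (γ σ) (γ' σ) σ + α) with hr0
    set γh : ℝ → Evec n := fun σ => if σ ≤ t then γ σ else X σ with hγhdef
    set γh' : ℝ → Evec n := fun σ => if σ ≤ t then γ' σ else V σ with hγh'def
    have hEq1 : ∀ σ : ℝ, σ ≤ t → γh σ = γ σ := fun σ hσ => if_pos hσ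
    have hEq1' : ∀ σ : ℝ, σ ≤ t → γh' σ = γ' σ := fun σ hσ => if_pos hσ
    have hEq2 : ∀ σ : ℝ, t ≤ σ → γh σ = X σ := by
      intro σ hσ
      rcases eq_or_lt_of_le hσ with rfl | h
      · simp only [hγhdef, if_pos le_rfl]; exact hγt
      · simp only [hγhdef, if_neg (not_le.2 h)]
    have hEq2' : ∀ σ : ℝ, t < σ → γh' σ = V σ := fun σ hσ => if_neg (not_le.2 hσ)
    have hseg1 : ∀ a b : ℝ, a ≤ b → b ≤ t →
        IntervalIntegrable γh' MeasureTheory.volume a b ∧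
          ∫ τ in a..b, γh' τ = ∫ τ in a..b, γ' τ := by
      intro a b hab hbt
      have h1 := (hACγ a (Set.mem_Iic.2 (le_trans hab hbt)) b (Set.mem_Iic.2 hbt)).1
      constructor
      · rw [intervalIntegrable_iff, Set.uIoc_of_le hab] at h1 ⊢
        exact h1.congr_fun (fun σ hσ => (hEq1' σ (le_trans hσ.2 hbt)).symm) measurableSet_Ioc
      · rw [intervalIntegral.integral_of_le hab, intervalIntegral.integral_of_le hab]
        exact MeasureTheory.setIntegral_congr_fun measurableSet_Ioc
          (fun σ hσ => hEq1' σ (le_trans hσ.2 hbt))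
    have hseg2 : ∀ a b : ℝ, t ≤ a → a ≤ b → b ≤ s →
        IntervalIntegrable γh' MeasureTheory.volume a b ∧
          ∫ τ in a..b, γh' τ = ∫ τ in a..b, V τ := by
      intro a b hta hab hbs
      have h1 : IntervalIntegrable V MeasureTheory.volume a b := by
        refine (hVc.mono ?_).intervalIntegrable
        rw [Set.uIcc_of_le hab]; exact fun x hx => le_trans hx.2 hbs
      constructor
      · rw [intervalIntegrable_iff, Set.uIoc_of_le hab] at h1 ⊢
        exact h1.congr_fun (fun σ hσ => (hEq2' σ (lt_of_le_of_lt hta hσ.1)).symm)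
          measurableSet_Ioc
      · rw [intervalIntegral.integral_of_le hab, intervalIntegral.integral_of_le hab]
        exact MeasureTheory.setIntegral_congr_fun measurableSet_Ioc
          (fun σ hσ => hEq2' σ (lt_of_le_of_lt hta hσ.1))
    have hACs : ACOn X V (Set.Iic s) := hACX s le_rfl
    have hACγh : ACOn γh γh' (Set.Iic s) := by
      apply ACOn_of_le
      intro a ha b hb hab
      rcases le_total b t with hbt | htb
      · obtain ⟨hi, he⟩ := hseg1 a b hab hbt
        refine ⟨hi, ?_⟩
        rw [hEq1 a (le_trans hab hbt), hEq1 b hbt, he]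
        exact (hACγ a (Set.mem_Iic.2 (le_trans hab hbt)) b (Set.mem_Iic.2 hbt)).2
      · rcases le_total t a with hta | hat
        · obtain ⟨hi, he⟩ := hseg2 a b hta hab hb
          refine ⟨hi, ?_⟩
          rw [hEq2 a hta, hEq2 b (le_trans hta hab), he]
          exact (hACs a ha b hb).2
        · obtain ⟨hi1, he1⟩ := hseg1 a t hat le_rfl
          obtain ⟨hi2, he2⟩ := hseg2 t b le_rfl htb hb
          refine ⟨hi1.trans hi2, ?_⟩
          rw [← intervalIntegral.integral_add_adjacent_intervals hi1 hi2, he1, he2,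
            hEq1 a hat, hEq2 b htb]
          have hX2 := (hACs t (Set.mem_Iic.2 hts) b hb).2
          have hγ2 := (hACγ a (Set.mem_Iic.2 hat) t (Set.mem_Iic.2 le_rfl)).2
          rw [hX2, ← hγt, hγ2]
          abel
    set r1 : ℝ := Real.exp (F t - F s) * r0 + Real.exp (-(F s)) * (E s - E t) with hr1
    have hintIic : MeasureTheory.IntegrableOn
        (fun σ => Real.exp (F σ - F s) * (L (γh σ) (γh' σ) σ + α)) (Set.Iic t)
        MeasureTheory.volume := by
      have h2 : MeasureTheory.IntegrableOn
          (fun σ => Real.exp (F t - F s) * (Real.exp (F σ - F t) * (L (γ σ) (γ' σ) σ + α)))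
          (Set.Iic t) MeasureTheory.volume := hintγ.const_mul _
      apply h2.congr_fun ?_ measurableSet_Iic
      intro σ hσ
      beta_reduce
      rw [hEq1 σ hσ, hEq1' σ hσ, ← mul_assoc, ← Real.exp_add,
        show F t - F s + (F σ - F t) = F σ - F s from by ring]
    have hintIoc : MeasureTheory.IntegrableOn
        (fun σ => Real.exp (F σ - F s) * (L (γh σ) (γh' σ) σ + α)) (Set.Ioc t s)
        MeasureTheory.volume := by
      have h2 : MeasureTheory.IntegrableOn (fun σ => Real.exp (-(F s)) * hfun σ)
          (Set.Ioc t s) MeasureTheory.volume :=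
        (((hint_h s le_rfl).1).mono_set (fun x hx => hx.2)).const_mul _
      apply h2.congr_fun ?_ measurableSet_Ioc
      intro σ hσ
      beta_reduce
      rw [hEq2 σ hσ.1.le, hEq2' σ hσ.1]
      simp only [hhfun]
      rw [← mul_assoc, ← Real.exp_add, show -(F s) + F σ = F σ - F s from by ring]
    have hintfull : MeasureTheory.IntegrableOn
        (fun σ => Real.exp (F σ - F s) * (L (γh σ) (γh' σ) σ + α)) (Set.Iic s)
        MeasureTheory.volume := by
      rw [← Set.Iic_union_Ioc_eq_Iic hts]
      exact hintIic.union hintIoc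
    have hval1 : ∫ σ in Set.Iic t, Real.exp (F σ - F s) * (L (γh σ) (γh' σ) σ + α)
        = Real.exp (F t - F s) * r0 := by
      have h3 : ∫ σ in Set.Iic t, Real.exp (F σ - F s) * (L (γh σ) (γh' σ) σ + α)
          = ∫ σ in Set.Iic t,
              Real.exp (F t - F s) * (Real.exp (F σ - F t) * (L (γ σ) (γ' σ) σ + α)) :=
        MeasureTheory.setIntegral_congr_fun measurableSet_Iic (fun σ hσ => by
          beta_reduce
          rw [hEq1 σ hσ, hEq1' σ hσ, ← mul_assoc, ← Real.exp_add,
            show F t - F s + (F σ - F t) = F σ - F s from by ring])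
      rw [h3, MeasureTheory.integral_const_mul, hr0]
    have hval2 : ∫ σ in Set.Ioc t s, Real.exp (F σ - F s) * (L (γh σ) (γh' σ) σ + α)
        = Real.exp (-(F s)) * (E s - E t) := by
      have h3 : ∫ σ in Set.Ioc t s, Real.exp (F σ - F s) * (L (γh σ) (γh' σ) σ + α)
          = ∫ σ in Set.Ioc t s, Real.exp (-(F s)) * hfun σ :=
        MeasureTheory.setIntegral_congr_fun measurableSet_Ioc (fun σ hσ => by
          beta_reduce
          rw [hEq2 σ hσ.1.le, hEq2' σ hσ.1]
          simp only [hhfun]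
          rw [← mul_assoc, ← Real.exp_add, show -(F s) + F σ = F σ - F s from by ring])
      rw [h3, MeasureTheory.integral_const_mul]
      congr 1
      rw [← intervalIntegral.integral_of_le hts, key t s hts le_rfl]
    have hr1mem : r1 ∈ wkSet F L α (X s) s := by
      refine ⟨γh, γh', hACγh, hEq2 s hts, hintfull, ?_⟩
      rw [hr1, ← hval1, ← hval2,
        ← MeasureTheory.setIntegral_union (Set.Iic_disjoint_Ioc le_rfl) measurableSet_Ioc
          hintIic hintIoc,
        Set.Iic_union_Ioc_eq_Iic hts]
    have h6 : U s ≤ r1 := le_trans hle (csInf_le (hbdd _ _) hr1mem)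
    have h7 := mul_le_mul_of_nonneg_left h6 (Real.exp_pos (F s)).le
    have h8 : Real.exp (F s) * r1 = Real.exp (F t) * r0 + (E s - E t) := by
      rw [hr1, mul_add, ← mul_assoc, ← mul_assoc, ← Real.exp_add, ← Real.exp_add,
        show F s + (F t - F s) = F t from by ring,
        show F s + -(F s) = 0 from by ring, Real.exp_zero, one_mul]
    rw [h8] at h7
    have hEs : E s = Real.exp (F s) * U s := by simp only [hE]
    have hEt : E t = Real.exp (F t) * U t := by simp only [hE]
    have h9 : Real.exp (F t) * U t ≤ Real.exp (F t) * r0 := by linarith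
    exact (mul_le_mul_iff_right₀ (Real.exp_pos (F t))).1 h9

  have ueq : ∀ t : ℝ, t ≤ s → uWK F L α (X t) t = U t := fun t hts =>
    le_antisymm (hle' t hts) (hge t hts)
  constructor
  · exact (ueq s le_rfl).symm
  · intro t₁ t₂ h12 h2s
    have hkey := key t₁ t₂ h12 h2s
    simp only [hhfun] at hkey
    rw [ueq t₁ (h12.trans h2s), ueq t₂ h2s]
    simp only [hgrad]
    rw [hkey, hE]
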